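/- arXiv:1904.10532 — 2 statements merged into one kernel-verified Lean document; each statement's English description precedes it below -/
import Mathlib

section
/- Let a = c₁ + c₂j be a nonzero lightlike split quaternion (c₁, c₂ ∈ ℂ, c₁ ≠ 0). Then the set of solutions x ∈ ℍₛ of the equation a x = 0 is exactly { (1/2)(1 − (c₂/c₁) j) · y : y ∈ ℍₛ }. -/
open Quaternion

/-- The split quaternions: `ℍ[ℝ, -1, 1]`. -/
abbrev SplitQuaternion : Type := ℍ[ℝ, -1, 1]

/-- The imaginary unit `j` of the split quaternions. -/
def qj : SplitQuaternion := ⟨0, 0, 1, 0⟩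

/-- The embedding `ℂ = ℝ + ℝi ⊂ ℍₛ`. -/
def toQ (z : ℂ) : SplitQuaternion := ⟨z.re, z.im, 0, 0⟩

lemma toQ_mul (z w : ℂ) : toQ (z * w) = toQ z * toQ w := by
  ext <;> simp [toQ, Complex.mul_re, Complex.mul_im] <;> ring

lemma toQ_one : toQ 1 = 1 := by ext <;> simp [toQ]

lemma toQ_neg_one : toQ (-1) = -1 := by ext <;> simp [toQ]

lemma qj_mul_toQ (z : ℂ) : qj * toQ z = toQ (starRingEnd ℂ z) * qj := by
  ext <;> simp [toQ, qj]

lemma qj_mul_qj : qj * qj = 1 := by ext <;> simp [qj]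

/-- For a nonzero lightlike split quaternion `a = c₁ + c₂j`, the solutions of `a x = 0`
are exactly `x = (1/2)(1 − (c₂/c₁)j) y`, `y ∈ ℍₛ`. -/
theorem ax_eq_zero_solutions (c₁ c₂ : ℂ) (hc : c₁ ≠ 0)
    (hla : ‖c₁‖ = ‖c₂‖)
    (a : SplitQuaternion) (ha : a = toQ c₁ + toQ c₂ * qj) :
    {x : SplitQuaternion | a * x = 0} =
      {x : SplitQuaternion | ∃ y : SplitQuaternion,
        x = (1 / 2 : ℝ) • ((1 - toQ (c₂ / c₁) * qj) * y)} := by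
  have hc2 : c₂ ≠ 0 := by
    intro h
    rw [h, norm_zero] at hla
    exact hc (norm_eq_zero.mp hla)
  have e1 : toQ c₁ * toQ (c₂ / c₁) = toQ c₂ := by
    rw [← toQ_mul, mul_div_cancel₀ _ hc]
  have e2 : toQ c₂ * toQ (starRingEnd ℂ (c₂ / c₁)) = toQ c₁ := by
    rw [← toQ_mul]; congr 1
    have h2 : c₂ * starRingEnd ℂ c₂ = c₁ * starRingEnd ℂ c₁ := by
      rw [Complex.mul_conj, Complex.mul_conj, Complex.normSq_eq_norm_sq,
        Complex.normSq_eq_norm_sq, hla]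
    have hc' : starRingEnd ℂ c₁ ≠ 0 := by simpa using hc
    rw [map_div₀]
    field_simp
    linear_combination h2
  have key : a * (1 - toQ (c₂ / c₁) * qj) = 0 := by
    rw [ha]
    calc (toQ c₁ + toQ c₂ * qj) * (1 - toQ (c₂ / c₁) * qj)
        = toQ c₁ + toQ c₂ * qj - toQ c₁ * toQ (c₂ / c₁) * qj
          - toQ c₂ * (qj * toQ (c₂ / c₁)) * qj := by noncomm_ring
      _ = toQ c₁ + toQ c₂ * qj - toQ c₂ * qj
          - toQ c₂ * toQ (starRingEnd ℂ (c₂ / c₁)) * (qj * qj) := by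
          rw [e1, qj_mul_toQ]; noncomm_ring
      _ = 0 := by rw [e2, qj_mul_qj, mul_one]; abel
  ext x
  simp only [Set.mem_setOf_eq]
  constructor
  · intro h
    refine ⟨x, ?_⟩
    rw [ha, add_mul, mul_assoc] at h
    have h1 : toQ c₂ * (qj * x) = -(toQ c₁ * x) := eq_neg_of_add_eq_zero_right h
    have h3 : toQ (c₂ / c₁) * (qj * x) = -x := by
      have e0 : toQ (c₂ / c₁) = toQ (1 / c₁) * toQ c₂ := by
        rw [← toQ_mul]; congr 1; ring
      calc toQ (c₂ / c₁) * (qj * x) = toQ (1 / c₁) * (toQ c₂ * (qj * x)) := by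
            rw [e0, mul_assoc]
        _ = toQ (1 / c₁) * -(toQ c₁ * x) := by rw [h1]
        _ = -(toQ ((1 / c₁) * c₁) * x) := by rw [toQ_mul, mul_neg, mul_assoc]
        _ = -x := by rw [one_div, inv_mul_cancel₀ hc, toQ_one, one_mul]
    rw [sub_mul, one_mul, mul_assoc, h3, sub_neg_eq_add, smul_add, ← add_smul]
    norm_num
  · rintro ⟨y, rfl⟩
    rw [mul_smul_comm, ← mul_assoc, key, zero_mul, smul_zero]
end

section
/- Let a = a₀ + a₁i + a₂j + a₃k and b = b₀ + b₁i + b₂j + b₃k be split quaternions that are not real (Im a ≠ 0 and Im b ≠ 0), and let T(a,b) = R(a) − L(b). (1) If a₀ = b₀ and K(a) = K(b), then rank T(a,b) = 2. (2) If a₀ ≠ b₀ and det T(a,b) = 0, then K(a) ≥ 0, K(b) ≥ 0, and rank T(a,b) = 3. -/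
open Quaternion Matrix

set_option maxHeartbeats 1600000

/-- `K(q) = (Im q)² = −q₁² + q₂² + q₃²`, as a real scalar. -/
def Kq (q : SplitQuaternion) : ℝ := -q.imI ^ 2 + q.imJ ^ 2 + q.imK ^ 2

/-- The matrix of left multiplication by `a` on `ℍₛ` in the basis `(1, i, j, k)`. -/
def Lm (a : SplitQuaternion) : Matrix (Fin 4) (Fin 4) ℝ :=
  !![a.re, -a.imI, a.imJ, a.imK;
     a.imI, a.re, a.imK, -a.imJ;
     a.imJ, a.imK, a.re, -a.imI;
     a.imK, -a.imJ, a.imI, a.re]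

/-- The matrix of right multiplication by `a` on `ℍₛ` in the basis `(1, i, j, k)`. -/
def Rm (a : SplitQuaternion) : Matrix (Fin 4) (Fin 4) ℝ :=
  !![a.re, -a.imI, a.imJ, a.imK;
     a.imI, a.re, -a.imK, a.imJ;
     a.imJ, -a.imK, a.re, a.imI;
     a.imK, a.imJ, -a.imI, a.re]

private lemma det4 (m00 m01 m02 m03 m10 m11 m12 m13 m20 m21 m22 m23 m30 m31 m32 m33 : ℝ) :
    (!![m00,m01,m02,m03; m10,m11,m12,m13; m20,m21,m22,m23; m30,m31,m32,m33]).det =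
      m00*(m11*(m22*m33 - m23*m32) - m12*(m21*m33 - m23*m31) + m13*(m21*m32 - m22*m31))
      - m01*(m10*(m22*m33 - m23*m32) - m12*(m20*m33 - m23*m30) + m13*(m20*m32 - m22*m30))
      + m02*(m10*(m21*m33 - m23*m31) - m11*(m20*m33 - m23*m30) + m13*(m20*m31 - m21*m30))
      - m03*(m10*(m21*m32 - m22*m31) - m11*(m20*m32 - m22*m30) + m12*(m20*m31 - m21*m30)) := by
  rw [Matrix.det_succ_row_zero]
  simp [Fin.sum_univ_succ, Matrix.det_fin_three, Fin.succAbove]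
  ring

private lemma aux_dep {W : Submodule ℝ (Fin 4 → ℝ)} {n : ℕ} {v : Fin n → Fin 4 → ℝ}
    (hv : ∀ i, v i ∈ W) (h : Module.finrank ℝ W < n) :
    ∃ g : Fin n → ℝ, ∑ i, g i • v i = 0 ∧ ∃ i, g i ≠ 0 := by
  apply Fintype.not_linearIndependent_iff.mp
  intro hli
  have hli' : LinearIndependent ℝ (fun i => (⟨v i, hv i⟩ : W)) := by
    apply LinearIndependent.of_comp W.subtype
    exact hli
  have := hli'.fintype_card_le_finrank
  simp only [Fintype.card_fin] at this
  omega

private lemma aux_pair {W : Submodule ℝ (Fin 4 → ℝ)} (hW : Module.finrank ℝ W ≤ 1)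
    {u v : Fin 4 → ℝ} (hu : u ∈ W) (hv : v ∈ W) (i j : Fin 4) :
    u i * v j - u j * v i = 0 := by
  obtain ⟨g, hg, l, hl⟩ := aux_dep (v := ![u, v]) (fun l => by fin_cases l <;> assumption) (by omega)
  have hgi := congrFun hg i
  have hgj := congrFun hg j
  simp [Fin.sum_univ_two] at hgi hgj
  have hN : Matrix.det !![u i, v i; u j, v j] = 0 := by
    apply Matrix.exists_mulVec_eq_zero_iff.mp
    refine ⟨g, fun h0 => hl (by rw [h0]; rfl), ?_⟩
    funext r
    fin_cases r
    · simp [Matrix.mulVec, dotProduct, Fin.sum_univ_two]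
      linear_combination hgi
    · simp [Matrix.mulVec, dotProduct, Fin.sum_univ_two]
      linear_combination hgj
  rw [Matrix.det_fin_two] at hN
  simp at hN
  linear_combination hN

private lemma aux_triple {W : Submodule ℝ (Fin 4 → ℝ)} (hW : Module.finrank ℝ W ≤ 2)
    {u v w : Fin 4 → ℝ} (hu : u ∈ W) (hv : v ∈ W) (hw : w ∈ W) (i j k : Fin 4) :
    u i * (v j * w k - v k * w j) - v i * (u j * w k - u k * w j)
      + w i * (u j * v k - u k * v j) = 0 := by
  obtain ⟨g, hg, l, hl⟩ := aux_dep (v := ![u, v, w]) (fun l => by fin_cases l <;> assumption) (by omega)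
  have hgi := congrFun hg i
  have hgj := congrFun hg j
  have hgk := congrFun hg k
  simp [Fin.sum_univ_three] at hgi hgj hgk
  have hN : Matrix.det !![u i, v i, w i; u j, v j, w j; u k, v k, w k] = 0 := by
    apply Matrix.exists_mulVec_eq_zero_iff.mp
    refine ⟨g, fun h0 => hl (by rw [h0]; rfl), ?_⟩
    funext r
    fin_cases r
    · simp [Matrix.mulVec, dotProduct, Fin.sum_univ_three]
      linear_combination hgi
    · simp [Matrix.mulVec, dotProduct, Fin.sum_univ_three]
      linear_combination hgj
    · simp [Matrix.mulVec, dotProduct, Fin.sum_univ_three]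
      linear_combination hgk
  rw [Matrix.det_fin_three] at hN
  simp at hN
  linear_combination hN

/-- For non-real split quaternions `a, b`, with `T(a,b) = R(a) − L(b)`:
(1) if `a₀ = b₀` and `K(a) = K(b)` then `rank T(a,b) = 2`;
(2) if `a₀ ≠ b₀` and `det T(a,b) = 0` then `K(a) ≥ 0`, `K(b) ≥ 0` and
`rank T(a,b) = 3`. -/
theorem rank_Rm_sub_Lm (a b : SplitQuaternion) (ha : a.im ≠ 0) (hb : b.im ≠ 0) :
    ((a.re = b.re ∧ Kq a = Kq b) → (Rm a - Lm b).rank = 2) ∧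
      ((a.re ≠ b.re ∧ (Rm a - Lm b).det = 0) →
        0 ≤ Kq a ∧ 0 ≤ Kq b ∧ (Rm a - Lm b).rank = 3) := by
  have ha' : ¬(a.imI = 0 ∧ a.imJ = 0 ∧ a.imK = 0) := by
    rintro ⟨h1, h2, h3⟩
    exact ha (by ext <;> simp [h1, h2, h3])
  have hb' : ¬(b.imI = 0 ∧ b.imJ = 0 ∧ b.imK = 0) := by
    rintro ⟨h1, h2, h3⟩
    exact hb (by ext <;> simp [h1, h2, h3])
  have hrnk : (Rm a - Lm b).rank = Module.finrank ℝ (LinearMap.range (Rm a - Lm b).mulVecLin) := rfl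
  have hrn : (Rm a - Lm b).rank + Module.finrank ℝ (LinearMap.ker (Rm a - Lm b).mulVecLin) = 4 := by
    have h := LinearMap.finrank_range_add_finrank_ker (Rm a - Lm b).mulVecLin
    rw [Module.finrank_fin_fun] at h
    rw [hrnk]
    exact h
  have hcol0 : (Rm a - Lm b).mulVec ![1, 0, 0, 0] = ![a.re - b.re, a.imI - b.imI, a.imJ - b.imJ, a.imK - b.imK] := by
    funext i
    fin_cases i <;> simp [Rm, Lm, Matrix.mulVec, dotProduct, Fin.sum_univ_four, Matrix.sub_apply] <;> ring
  have hm0 : (![a.re - b.re, a.imI - b.imI, a.imJ - b.imJ, a.imK - b.imK]) ∈ LinearMap.range (Rm a - Lm b).mulVecLin :=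
    ⟨![1, 0, 0, 0], by rw [Matrix.mulVecLin_apply]; exact hcol0⟩
  have hcol1 : (Rm a - Lm b).mulVec ![0, 1, 0, 0] = ![-a.imI + b.imI, a.re - b.re, -a.imK - b.imK, a.imJ + b.imJ] := by
    funext i
    fin_cases i <;> simp [Rm, Lm, Matrix.mulVec, dotProduct, Fin.sum_univ_four, Matrix.sub_apply] <;> ring
  have hm1 : (![-a.imI + b.imI, a.re - b.re, -a.imK - b.imK, a.imJ + b.imJ]) ∈ LinearMap.range (Rm a - Lm b).mulVecLin :=
    ⟨![0, 1, 0, 0], by rw [Matrix.mulVecLin_apply]; exact hcol1⟩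
  have hcol2 : (Rm a - Lm b).mulVec ![0, 0, 1, 0] = ![a.imJ - b.imJ, -a.imK - b.imK, a.re - b.re, -a.imI - b.imI] := by
    funext i
    fin_cases i <;> simp [Rm, Lm, Matrix.mulVec, dotProduct, Fin.sum_univ_four, Matrix.sub_apply] <;> ring
  have hm2 : (![a.imJ - b.imJ, -a.imK - b.imK, a.re - b.re, -a.imI - b.imI]) ∈ LinearMap.range (Rm a - Lm b).mulVecLin :=
    ⟨![0, 0, 1, 0], by rw [Matrix.mulVecLin_apply]; exact hcol2⟩
  have hcol3 : (Rm a - Lm b).mulVec ![0, 0, 0, 1] = ![a.imK - b.imK, a.imJ + b.imJ, a.imI + b.imI, a.re - b.re] := by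
    funext i
    fin_cases i <;> simp [Rm, Lm, Matrix.mulVec, dotProduct, Fin.sum_univ_four, Matrix.sub_apply] <;> ring
  have hm3 : (![a.imK - b.imK, a.imJ + b.imJ, a.imI + b.imI, a.re - b.re]) ∈ LinearMap.range (Rm a - Lm b).mulVecLin :=
    ⟨![0, 0, 0, 1], by rw [Matrix.mulVecLin_apply]; exact hcol3⟩
  constructor
  · rintro ⟨h0, hKq⟩
    have hK : -a.imI^2 + a.imJ^2 + a.imK^2 = -b.imI^2 + b.imJ^2 + b.imK^2 := by
      simpa [Kq] using hKq
    have hv0 : (Rm a - Lm b).mulVec ![0, a.imI + b.imI, a.imJ + b.imJ, a.imK + b.imK] = 0 := by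
      funext i
      fin_cases i
      · simp [Rm, Lm, Matrix.mulVec, dotProduct, Fin.sum_univ_four, Matrix.sub_apply]
        first
        | linear_combination (0) * h0 + hK
        | linear_combination -((0) * h0 + hK)
      · simp [Rm, Lm, Matrix.mulVec, dotProduct, Fin.sum_univ_four, Matrix.sub_apply]
        first
        | linear_combination (a.imI + b.imI) * h0
        | linear_combination -((a.imI + b.imI) * h0)
      · simp [Rm, Lm, Matrix.mulVec, dotProduct, Fin.sum_univ_four, Matrix.sub_apply]
        first
        | linear_combination (a.imJ + b.imJ) * h0
        | linear_combination -((a.imJ + b.imJ) * h0)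
      · simp [Rm, Lm, Matrix.mulVec, dotProduct, Fin.sum_univ_four, Matrix.sub_apply]
        first
        | linear_combination (a.imK + b.imK) * h0
        | linear_combination -((a.imK + b.imK) * h0)
    have hkm0 : (![0, a.imI + b.imI, a.imJ + b.imJ, a.imK + b.imK]) ∈ LinearMap.ker (Rm a - Lm b).mulVecLin :=
      LinearMap.mem_ker.mpr (by rw [Matrix.mulVecLin_apply]; exact hv0)
    have hv1 : (Rm a - Lm b).mulVec ![-a.imI - b.imI, 0, -a.imK + b.imK, a.imJ - b.imJ] = 0 := by
      funext i
      fin_cases i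
      · simp [Rm, Lm, Matrix.mulVec, dotProduct, Fin.sum_univ_four, Matrix.sub_apply]
        first
        | linear_combination (-a.imI - b.imI) * h0
        | linear_combination -((-a.imI - b.imI) * h0)
      · simp [Rm, Lm, Matrix.mulVec, dotProduct, Fin.sum_univ_four, Matrix.sub_apply]
        first
        | linear_combination (0) * h0 + hK
        | linear_combination -((0) * h0 + hK)
      · simp [Rm, Lm, Matrix.mulVec, dotProduct, Fin.sum_univ_four, Matrix.sub_apply]
        first
        | linear_combination (-a.imK + b.imK) * h0
        | linear_combination -((-a.imK + b.imK) * h0)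
      · simp [Rm, Lm, Matrix.mulVec, dotProduct, Fin.sum_univ_four, Matrix.sub_apply]
        first
        | linear_combination (a.imJ - b.imJ) * h0
        | linear_combination -((a.imJ - b.imJ) * h0)
    have hkm1 : (![-a.imI - b.imI, 0, -a.imK + b.imK, a.imJ - b.imJ]) ∈ LinearMap.ker (Rm a - Lm b).mulVecLin :=
      LinearMap.mem_ker.mpr (by rw [Matrix.mulVecLin_apply]; exact hv1)
    have hv2 : (Rm a - Lm b).mulVec ![a.imJ + b.imJ, -a.imK + b.imK, 0, -a.imI + b.imI] = 0 := by
      funext i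
      fin_cases i
      · simp [Rm, Lm, Matrix.mulVec, dotProduct, Fin.sum_univ_four, Matrix.sub_apply]
        first
        | linear_combination (a.imJ + b.imJ) * h0
        | linear_combination -((a.imJ + b.imJ) * h0)
      · simp [Rm, Lm, Matrix.mulVec, dotProduct, Fin.sum_univ_four, Matrix.sub_apply]
        first
        | linear_combination (-a.imK + b.imK) * h0
        | linear_combination -((-a.imK + b.imK) * h0)
      · simp [Rm, Lm, Matrix.mulVec, dotProduct, Fin.sum_univ_four, Matrix.sub_apply]
        first
        | linear_combination (0) * h0 + hK
        | linear_combination -((0) * h0 + hK)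
      · simp [Rm, Lm, Matrix.mulVec, dotProduct, Fin.sum_univ_four, Matrix.sub_apply]
        first
        | linear_combination (-a.imI + b.imI) * h0
        | linear_combination -((-a.imI + b.imI) * h0)
    have hkm2 : (![a.imJ + b.imJ, -a.imK + b.imK, 0, -a.imI + b.imI]) ∈ LinearMap.ker (Rm a - Lm b).mulVecLin :=
      LinearMap.mem_ker.mpr (by rw [Matrix.mulVecLin_apply]; exact hv2)
    have hv3 : (Rm a - Lm b).mulVec ![a.imK + b.imK, a.imJ - b.imJ, a.imI - b.imI, 0] = 0 := by
      funext i
      fin_cases i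
      · simp [Rm, Lm, Matrix.mulVec, dotProduct, Fin.sum_univ_four, Matrix.sub_apply]
        first
        | linear_combination (a.imK + b.imK) * h0
        | linear_combination -((a.imK + b.imK) * h0)
      · simp [Rm, Lm, Matrix.mulVec, dotProduct, Fin.sum_univ_four, Matrix.sub_apply]
        first
        | linear_combination (a.imJ - b.imJ) * h0
        | linear_combination -((a.imJ - b.imJ) * h0)
      · simp [Rm, Lm, Matrix.mulVec, dotProduct, Fin.sum_univ_four, Matrix.sub_apply]
        first
        | linear_combination (a.imI - b.imI) * h0
        | linear_combination -((a.imI - b.imI) * h0)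
      · simp [Rm, Lm, Matrix.mulVec, dotProduct, Fin.sum_univ_four, Matrix.sub_apply]
        first
        | linear_combination (0) * h0 + hK
        | linear_combination -((0) * h0 + hK)
    have hkm3 : (![a.imK + b.imK, a.imJ - b.imJ, a.imI - b.imI, 0]) ∈ LinearMap.ker (Rm a - Lm b).mulVecLin :=
      LinearMap.mem_ker.mpr (by rw [Matrix.mulVecLin_apply]; exact hv3)
    have hge : 2 ≤ (Rm a - Lm b).rank := by
      by_contra hcon
      push_neg at hcon
      have hf1 : Module.finrank ℝ (LinearMap.range (Rm a - Lm b).mulVecLin) ≤ 1 := by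
        rw [← hrnk]; omega
      have E0 := aux_pair hf1 hm0 hm1 0 1
      have E1 := aux_pair hf1 hm0 hm2 0 2
      have E2 := aux_pair hf1 hm0 hm3 0 3
      have E3 := aux_pair hf1 hm1 hm2 1 2
      have E4 := aux_pair hf1 hm1 hm3 1 3
      have E5 := aux_pair hf1 hm2 hm3 2 3
      simp only [Matrix.cons_val_zero, Matrix.cons_val_one, Matrix.cons_val_two, Matrix.cons_val_three, Matrix.head_cons, Matrix.tail_cons, Fin.isValue] at E0 E1 E2 E3 E4 E5
      have s0 : (a.imI - b.imI)^2 = 0 := by linear_combination E0 + (-a.re + b.re) * h0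
      have t0 := (pow_eq_zero_iff two_ne_zero).mp s0
      have s1 : (a.imJ - b.imJ)^2 = 0 := by linear_combination (-1 : ℝ) * E1 + (a.re - b.re) * h0
      have t1 := (pow_eq_zero_iff two_ne_zero).mp s1
      have s2 : (a.imK - b.imK)^2 = 0 := by linear_combination (-1 : ℝ) * E2 + (a.re - b.re) * h0
      have t2 := (pow_eq_zero_iff two_ne_zero).mp s2
      have s3 : (a.imK + b.imK)^2 = 0 := by linear_combination (-1 : ℝ) * E3 + (a.re - b.re) * h0
      have t3 := (pow_eq_zero_iff two_ne_zero).mp s3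
      have s4 : (a.imJ + b.imJ)^2 = 0 := by linear_combination (-1 : ℝ) * E4 + (a.re - b.re) * h0
      have t4 := (pow_eq_zero_iff two_ne_zero).mp s4
      have s5 : (a.imI + b.imI)^2 = 0 := by linear_combination E5 + (-a.re + b.re) * h0
      have t5 := (pow_eq_zero_iff two_ne_zero).mp s5
      exact ha' ⟨by linarith, by linarith, by linarith⟩
    have hle : (Rm a - Lm b).rank ≤ 2 := by
      by_contra hcon
      push_neg at hcon
      have hf1 : Module.finrank ℝ (LinearMap.ker (Rm a - Lm b).mulVecLin) ≤ 1 := by omega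
      have E0 := aux_pair hf1 hkm0 hkm1 0 1
      have E1 := aux_pair hf1 hkm0 hkm2 0 2
      have E2 := aux_pair hf1 hkm0 hkm3 0 3
      have E3 := aux_pair hf1 hkm1 hkm2 1 2
      have E4 := aux_pair hf1 hkm1 hkm3 1 3
      have E5 := aux_pair hf1 hkm2 hkm3 2 3
      simp only [Matrix.cons_val_zero, Matrix.cons_val_one, Matrix.cons_val_two, Matrix.cons_val_three, Matrix.head_cons, Matrix.tail_cons, Fin.isValue] at E0 E1 E2 E3 E4 E5
      have s0 : (a.imI + b.imI)^2 = 0 := by linear_combination E0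
      have t0 := (pow_eq_zero_iff two_ne_zero).mp s0
      have s1 : (a.imJ + b.imJ)^2 = 0 := by linear_combination (-1 : ℝ) * E1
      have t1 := (pow_eq_zero_iff two_ne_zero).mp s1
      have s2 : (a.imK + b.imK)^2 = 0 := by linear_combination (-1 : ℝ) * E2
      have t2 := (pow_eq_zero_iff two_ne_zero).mp s2
      have s3 : (a.imK - b.imK)^2 = 0 := by linear_combination (-1 : ℝ) * E3
      have t3 := (pow_eq_zero_iff two_ne_zero).mp s3
      have s4 : (a.imJ - b.imJ)^2 = 0 := by linear_combination (-1 : ℝ) * E4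
      have t4 := (pow_eq_zero_iff two_ne_zero).mp s4
      have s5 : (a.imI - b.imI)^2 = 0 := by linear_combination E5
      have t5 := (pow_eq_zero_iff two_ne_zero).mp s5
      exact ha' ⟨by linarith, by linarith, by linarith⟩
    exact le_antisymm hle hge
  · rintro ⟨hne, hdet⟩
    have hα : a.re - b.re ≠ 0 := sub_ne_zero.mpr hne
    have hTm : Rm a - Lm b = !![a.re - b.re, -a.imI + b.imI, a.imJ - b.imJ, a.imK - b.imK;
        a.imI - b.imI, a.re - b.re, -a.imK - b.imK, a.imJ + b.imJ;
        a.imJ - b.imJ, -a.imK - b.imK, a.re - b.re, a.imI + b.imI;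
        a.imK - b.imK, a.imJ + b.imJ, -a.imI - b.imI, a.re - b.re] := by
      ext i j
      fin_cases i <;> fin_cases j <;> simp [Rm, Lm] <;> ring
    have hdc : ((a.re - b.re)^2)^2 - 2*(a.re - b.re)^2*((-a.imI^2 + a.imJ^2 + a.imK^2) + (-b.imI^2 + b.imJ^2 + b.imK^2)) + ((-a.imI^2 + a.imJ^2 + a.imK^2) - (-b.imI^2 + b.imJ^2 + b.imK^2))^2 = 0 := by
      have e : (Rm a - Lm b).det = ((a.re - b.re)^2)^2 - 2*(a.re - b.re)^2*((-a.imI^2 + a.imJ^2 + a.imK^2) + (-b.imI^2 + b.imJ^2 + b.imK^2)) + ((-a.imI^2 + a.imJ^2 + a.imK^2) - (-b.imI^2 + b.imJ^2 + b.imK^2))^2 := by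
        rw [hTm, det4]
        ring
      rw [← e]; exact hdet
    have h4a : 4*(a.re - b.re)^2*(-a.imI^2 + a.imJ^2 + a.imK^2) = ((-b.imI^2 + b.imJ^2 + b.imK^2) - (a.re - b.re)^2 - (-a.imI^2 + a.imJ^2 + a.imK^2))^2 := by
      linear_combination (-1 : ℝ) * hdc
    have h4b : 4*(a.re - b.re)^2*(-b.imI^2 + b.imJ^2 + b.imK^2) = ((-a.imI^2 + a.imJ^2 + a.imK^2) - (a.re - b.re)^2 - (-b.imI^2 + b.imJ^2 + b.imK^2))^2 := by
      linear_combination (-1 : ℝ) * hdc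
    have hα2 : 0 < (a.re - b.re)^2 := by positivity
    have hKa : (0:ℝ) ≤ -a.imI^2 + a.imJ^2 + a.imK^2 := by nlinarith [h4a, hα2]
    have hKb : (0:ℝ) ≤ -b.imI^2 + b.imJ^2 + b.imK^2 := by nlinarith [h4b, hα2]
    have hker1 : 1 ≤ Module.finrank ℝ (LinearMap.ker (Rm a - Lm b).mulVecLin) := by
      have hdet0 : (Rm a - Lm b).det = 0 := hdet
      obtain ⟨v, hv0, hv⟩ := Matrix.exists_mulVec_eq_zero_iff.mpr hdet0
      have hm : v ∈ LinearMap.ker (Rm a - Lm b).mulVecLin :=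
        LinearMap.mem_ker.mpr (by rw [Matrix.mulVecLin_apply]; exact hv)
      have : 0 < Module.finrank ℝ (LinearMap.ker (Rm a - Lm b).mulVecLin) :=
        Module.finrank_pos_iff_exists_ne_zero.mpr ⟨⟨v, hm⟩, by simpa using hv0⟩
      omega
    have hle : (Rm a - Lm b).rank ≤ 3 := by omega
    have hge : 3 ≤ (Rm a - Lm b).rank := by
      by_contra hcon
      push_neg at hcon
      have hf2 : Module.finrank ℝ (LinearMap.range (Rm a - Lm b).mulVecLin) ≤ 2 := by
        rw [← hrnk]; omega
      have E00 := aux_triple hf2 hm1 hm2 hm3 1 2 3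
      have E01 := aux_triple hf2 hm1 hm2 hm3 0 2 3
      have E02 := aux_triple hf2 hm1 hm2 hm3 0 1 3
      have E03 := aux_triple hf2 hm1 hm2 hm3 0 1 2
      have E10 := aux_triple hf2 hm0 hm2 hm3 1 2 3
      have E11 := aux_triple hf2 hm0 hm2 hm3 0 2 3
      have E12 := aux_triple hf2 hm0 hm2 hm3 0 1 3
      have E13 := aux_triple hf2 hm0 hm2 hm3 0 1 2
      have E20 := aux_triple hf2 hm0 hm1 hm3 1 2 3
      have E21 := aux_triple hf2 hm0 hm1 hm3 0 2 3
      have E22 := aux_triple hf2 hm0 hm1 hm3 0 1 3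
      have E23 := aux_triple hf2 hm0 hm1 hm3 0 1 2
      have E30 := aux_triple hf2 hm0 hm1 hm2 1 2 3
      have E31 := aux_triple hf2 hm0 hm1 hm2 0 2 3
      have E32 := aux_triple hf2 hm0 hm1 hm2 0 1 3
      have E33 := aux_triple hf2 hm0 hm1 hm2 0 1 2
      simp only [Matrix.cons_val_zero, Matrix.cons_val_one, Matrix.cons_val_two, Matrix.cons_val_three, Matrix.head_cons, Matrix.tail_cons, Fin.isValue] at E00 E01 E02 E03 E10 E11 E12 E13 E20 E21 E22 E23 E30 E31 E32 E33
      have eq1 : (a.re - b.re) * ((a.re - b.re)^2 - (-a.imI^2 + a.imJ^2 + a.imK^2) - (-b.imI^2 + b.imJ^2 + b.imK^2)) = 0 := by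
        linear_combination ((1/4) : ℝ) * E00 + ((1/4) : ℝ) * E11 + ((1/4) : ℝ) * E22 + ((1/4) : ℝ) * E33
      have hs := (mul_eq_zero.mp eq1).resolve_left hα
      have eq4 : (a.re - b.re) * ((-a.imI^2 + a.imJ^2 + a.imK^2) * (-b.imI^2 + b.imJ^2 + b.imK^2)) = 0 := by
        linear_combination ((1/8)*a.imI*b.imI + (-1/8)*a.imJ*b.imJ + (-1/8)*a.imK*b.imK) * E00 + ((1/8)*a.imJ*b.imK + (-1/8)*a.imK*b.imJ) * E10 + ((1/8)*a.imI*b.imK + (-1/8)*a.imK*b.imI) * E20 + ((1/8)*a.imI*b.imJ + (-1/8)*a.imJ*b.imI) * E30 + ((1/8)*a.imJ*b.imK + (-1/8)*a.imK*b.imJ) * E01 + ((1/8)*a.imI*b.imI + (1/8)*a.imJ*b.imJ + (1/8)*a.imK*b.imK) * E11 + ((1/8)*a.imI*b.imJ + (1/8)*a.imJ*b.imI) * E21 + ((-1/8)*a.imI*b.imK + (-1/8)*a.imK*b.imI) * E31 + ((-1/8)*a.imI*b.imK + (1/8)*a.imK*b.imI) * E02 + ((-1/8)*a.imI*b.imJ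 + (-1/8)*a.imJ*b.imI) * E12 + ((-1/8)*a.imI*b.imI + (-1/8)*a.imJ*b.imJ + (1/8)*a.imK*b.imK) * E22 + ((1/8)*a.imJ*b.imK + (1/8)*a.imK*b.imJ) * E32 + ((-1/8)*a.imI*b.imJ + (1/8)*a.imJ*b.imI) * E03 + ((1/8)*a.imI*b.imK + (1/8)*a.imK*b.imI) * E13 + ((1/8)*a.imJ*b.imK + (1/8)*a.imK*b.imJ) * E23 + ((-1/8)*a.imI*b.imI + (1/8)*a.imJ*b.imJ + (-1/8)*a.imK*b.imK) * E33
      have hKK := (mul_eq_zero.mp eq4).resolve_left hα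
      have h2α : -2 * (a.re - b.re) ≠ 0 := by intro hcc; apply hα; linarith
      rcases mul_eq_zero.mp hKK with hKa0 | hKb0
      · -- K(a) = 0 branch
        have k10' : -2 * (a.re - b.re) * ((a.re - b.re) * (a.imI) + (a.imJ*b.imK - a.imK*b.imJ)) = 0 := by
          linear_combination ((-1)) * E10 + (-a.imI - b.imI) * hs + ((-2)*a.imI + (-2)*b.imI) * hKa0
        have k10 := (mul_eq_zero.mp k10').resolve_left h2α
        have k20' : -2 * (a.re - b.re) * ((a.re - b.re) * (a.imJ) + (a.imI*b.imK - a.imK*b.imI)) = 0 := by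
          linear_combination (1) * E20 + (-a.imJ - b.imJ) * hs + ((-2)*a.imJ + (-2)*b.imJ) * hKa0
        have k20 := (mul_eq_zero.mp k20').resolve_left h2α
        have k30' : -2 * (a.re - b.re) * ((a.re - b.re) * (a.imK) + (-a.imI*b.imJ + a.imJ*b.imI)) = 0 := by
          linear_combination ((-1)) * E30 + (-a.imK - b.imK) * hs + ((-2)*a.imK + (-2)*b.imK) * hKa0
        have k30 := (mul_eq_zero.mp k30').resolve_left h2α
        have k01' : -2 * (a.re - b.re) * ((a.re - b.re) * (-a.imI) + (a.imJ*b.imK - a.imK*b.imJ)) = 0 := by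
          linear_combination ((-1)) * E01 + (a.imI + b.imI) * hs + (2*a.imI + 2*b.imI) * hKa0
        have k01 := (mul_eq_zero.mp k01').resolve_left h2α
        have k02' : -2 * (a.re - b.re) * ((a.re - b.re) * (a.imJ) + (-a.imI*b.imK + a.imK*b.imI)) = 0 := by
          linear_combination (1) * E02 + (-a.imJ - b.imJ) * hs + ((-2)*a.imJ + (-2)*b.imJ) * hKa0
        have k02 := (mul_eq_zero.mp k02').resolve_left h2α
        have k03' : -2 * (a.re - b.re) * ((a.re - b.re) * (a.imK) + (a.imI*b.imJ - a.imJ*b.imI)) = 0 := by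
          linear_combination ((-1)) * E03 + (-a.imK - b.imK) * hs + ((-2)*a.imK + (-2)*b.imK) * hKa0
        have k03 := (mul_eq_zero.mp k03').resolve_left h2α
        have f1 : (a.re - b.re) * a.imI = 0 := by
          linear_combination ((1/2) : ℝ) * k10 + ((-1/2) : ℝ) * k01
        have f2 : (a.re - b.re) * a.imJ = 0 := by
          linear_combination ((1/2) : ℝ) * k20 + ((1/2) : ℝ) * k02
        have f3 : (a.re - b.re) * a.imK = 0 := by
          linear_combination ((1/2) : ℝ) * k30 + ((1/2) : ℝ) * k03
        exact ha' ⟨(mul_eq_zero.mp f1).resolve_left hα, (mul_eq_zero.mp f2).resolve_left hα, (mul_eq_zero.mp f3).resolve_left hα⟩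
      · -- K(b) = 0 branch
        have k10' : -2 * (a.re - b.re) * (-((a.re - b.re) * (b.imI)) + (a.imJ*b.imK - a.imK*b.imJ)) = 0 := by
          linear_combination ((-1)) * E10 + (a.imI + b.imI) * hs + (2*a.imI + 2*b.imI) * hKb0
        have k10 := (mul_eq_zero.mp k10').resolve_left h2α
        have k20' : -2 * (a.re - b.re) * (-((a.re - b.re) * (b.imJ)) + (a.imI*b.imK - a.imK*b.imI)) = 0 := by
          linear_combination (1) * E20 + (a.imJ + b.imJ) * hs + (2*a.imJ + 2*b.imJ) * hKb0
        have k20 := (mul_eq_zero.mp k20').resolve_left h2α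
        have k30' : -2 * (a.re - b.re) * (-((a.re - b.re) * (b.imK)) + (-a.imI*b.imJ + a.imJ*b.imI)) = 0 := by
          linear_combination ((-1)) * E30 + (a.imK + b.imK) * hs + (2*a.imK + 2*b.imK) * hKb0
        have k30 := (mul_eq_zero.mp k30').resolve_left h2α
        have k01' : -2 * (a.re - b.re) * (-((a.re - b.re) * (-b.imI)) + (a.imJ*b.imK - a.imK*b.imJ)) = 0 := by
          linear_combination ((-1)) * E01 + (-a.imI - b.imI) * hs + ((-2)*a.imI + (-2)*b.imI) * hKb0
        have k01 := (mul_eq_zero.mp k01').resolve_left h2α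
        have k02' : -2 * (a.re - b.re) * (-((a.re - b.re) * (b.imJ)) + (-a.imI*b.imK + a.imK*b.imI)) = 0 := by
          linear_combination (1) * E02 + (a.imJ + b.imJ) * hs + (2*a.imJ + 2*b.imJ) * hKb0
        have k02 := (mul_eq_zero.mp k02').resolve_left h2α
        have k03' : -2 * (a.re - b.re) * (-((a.re - b.re) * (b.imK)) + (a.imI*b.imJ - a.imJ*b.imI)) = 0 := by
          linear_combination ((-1)) * E03 + (a.imK + b.imK) * hs + (2*a.imK + 2*b.imK) * hKb0
        have k03 := (mul_eq_zero.mp k03').resolve_left h2α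
        have f1 : (a.re - b.re) * b.imI = 0 := by
          linear_combination ((-1/2) : ℝ) * k10 + ((1/2) : ℝ) * k01
        have f2 : (a.re - b.re) * b.imJ = 0 := by
          linear_combination ((-1/2) : ℝ) * k20 + ((-1/2) : ℝ) * k02
        have f3 : (a.re - b.re) * b.imK = 0 := by
          linear_combination ((-1/2) : ℝ) * k30 + ((-1/2) : ℝ) * k03
        exact hb' ⟨(mul_eq_zero.mp f1).resolve_left hα, (mul_eq_zero.mp f2).resolve_left hα, (mul_eq_zero.mp f3).resolve_left hα⟩
    refine ⟨by simpa [Kq] using hKa, by simpa [Kq] using hKb, le_antisymm hle hge⟩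
end
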